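/- Fix K ≥ 1, m > 0, P_max > 0, and sequences a_k > 0, Q_k ≥ 0, G_k > 0. For n > 0 define p_k(n) = (P_max + Σ_i a_i)·( a_k^{2n/(2n+m)}·e^{2√n Q_k/(2n+m)}·G_k^{m/(2n+m)} ) / ( Σ_i a_i^{2n/(2n+m)}·e^{2√n Q_i/(2n+m)}·G_i^{m/(2n+m)} ) − a_k and q_k(n) = (P_max + Σ_i a_i)·( a_k·e^{Q_k/√n} ) / ( Σ_i a_i·e^{Q_i/√n} ) − a_k. Then for each k, p_k(n) − q_k(n) → 0 as n → ∞. -/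

import Mathlib

open Real Finset Filter

theorem stmt_18 (K : ℕ) (hK : 1 ≤ K) (m Pmax : ℝ) (hm : 0 < m) (hP : 0 < Pmax)
    (a Q G : Fin K → ℝ) (ha : ∀ k, 0 < a k) (hQ : ∀ k, 0 ≤ Q k) (hG : ∀ k, 0 < G k) :
    let p : Fin K → ℝ → ℝ := fun k n =>
      (Pmax + ∑ i, a i) *
          (a k ^ (2 * n / (2 * n + m)) * Real.exp (2 * Real.sqrt n * Q k / (2 * n + m)) *
            G k ^ (m / (2 * n + m))) /
          (∑ i, a i ^ (2 * n / (2 * n + m)) * Real.exp (2 * Real.sqrt n * Q i / (2 * n + m)) *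
            G i ^ (m / (2 * n + m))) - a k
    let q : Fin K → ℝ → ℝ := fun k n =>
      (Pmax + ∑ i, a i) * (a k * Real.exp (Q k / Real.sqrt n)) /
          (∑ i, a i * Real.exp (Q i / Real.sqrt n)) - a k
    ∀ k, Filter.Tendsto (fun n : ℝ => p k n - q k n) atTop (nhds 0) := by
  intro p q k
  haveI : Nonempty (Fin K) := Fin.pos_iff_nonempty.mp hK
  have hSpos : 0 < ∑ i, a i := Finset.sum_pos (fun i _ => ha i) Finset.univ_nonempty
  have h2nm : Tendsto (fun n : ℝ => 2 * n + m) atTop atTop :=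
    tendsto_atTop_add_const_right _ m (tendsto_id.const_mul_atTop two_pos)
  have hm0 : Tendsto (fun n : ℝ => m / (2 * n + m)) atTop (nhds 0) :=
    tendsto_const_nhds.div_atTop h2nm
  have hfrac : Tendsto (fun n : ℝ => 2 * n / (2 * n + m)) atTop (nhds 1) := by
    have h : Tendsto (fun n : ℝ => 1 - m / (2 * n + m)) atTop (nhds 1) := by
      simpa using tendsto_const_nhds.sub hm0
    refine h.congr' ?_
    filter_upwards [h2nm.eventually_gt_atTop 0] with n hn
    field_simp
    ring
  have hsqrt : Tendsto (fun n : ℝ => Real.sqrt n) atTop atTop := by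
    simp only [Real.sqrt_eq_rpow]
    exact tendsto_rpow_atTop (by norm_num)
  have hratio : Tendsto (fun n : ℝ => (2 * n + m) / Real.sqrt n) atTop atTop := by
    refine tendsto_atTop_mono' atTop ?_ (hsqrt.const_mul_atTop two_pos)
    filter_upwards [eventually_gt_atTop (0 : ℝ)] with n hn
    have hs : 0 < Real.sqrt n := Real.sqrt_pos.mpr hn
    rw [le_div_iff₀ hs]
    have h2 : 2 * Real.sqrt n * Real.sqrt n = 2 * n := by
      rw [mul_assoc, Real.mul_self_sqrt hn.le]
    rw [h2]; linarith
  have hC : ∀ c : ℝ, Tendsto (fun n : ℝ => 2 * Real.sqrt n * c / (2 * n + m)) atTop (nhds 0) := by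
    intro c
    have h := (tendsto_const_nhds (x := 2 * c)).div_atTop hratio
    refine h.congr' ?_
    filter_upwards [eventually_gt_atTop (0 : ℝ)] with n hn
    have hs : Real.sqrt n ≠ 0 := (Real.sqrt_pos.mpr hn).ne'
    have h2 : 2 * n + m ≠ 0 := by positivity
    field_simp
  have hB : ∀ c : ℝ, Tendsto (fun n : ℝ => c / Real.sqrt n) atTop (nhds 0) :=
    fun c => tendsto_const_nhds.div_atTop hsqrt
  have hterm : ∀ i, Tendsto (fun n : ℝ =>
      a i ^ (2 * n / (2 * n + m)) * Real.exp (2 * Real.sqrt n * Q i / (2 * n + m)) *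
        G i ^ (m / (2 * n + m))) atTop (nhds (a i)) := by
    intro i
    have h1 : Tendsto (fun n : ℝ => a i ^ (2 * n / (2 * n + m))) atTop (nhds (a i)) := by
      have := Filter.Tendsto.rpow (tendsto_const_nhds (x := a i)) hfrac (Or.inl (ha i).ne')
      simpa using this
    have h2 : Tendsto (fun n : ℝ => Real.exp (2 * Real.sqrt n * Q i / (2 * n + m)))
        atTop (nhds 1) := by
      have := (Real.continuous_exp.tendsto 0).comp (hC (Q i))
      simpa [Function.comp_def] using this
    have h3 : Tendsto (fun n : ℝ => G i ^ (m / (2 * n + m))) atTop (nhds 1) := by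
      have := Filter.Tendsto.rpow (tendsto_const_nhds (x := G i)) hm0 (Or.inl (hG i).ne')
      simpa using this
    simpa using (h1.mul h2).mul h3
  have hqterm : ∀ i, Tendsto (fun n : ℝ => a i * Real.exp (Q i / Real.sqrt n))
      atTop (nhds (a i)) := by
    intro i
    have h := (Real.continuous_exp.tendsto 0).comp (hB (Q i))
    simpa [Function.comp] using (tendsto_const_nhds (x := a i)).mul h
  have hsum_p : Tendsto (fun n : ℝ => ∑ i, a i ^ (2 * n / (2 * n + m)) *
      Real.exp (2 * Real.sqrt n * Q i / (2 * n + m)) * G i ^ (m / (2 * n + m)))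
      atTop (nhds (∑ i, a i)) := tendsto_finset_sum _ fun i _ => hterm i
  have hsum_q : Tendsto (fun n : ℝ => ∑ i, a i * Real.exp (Q i / Real.sqrt n))
      atTop (nhds (∑ i, a i)) := tendsto_finset_sum _ fun i _ => hqterm i
  have hp : Tendsto (fun n : ℝ => p k n) atTop
      (nhds ((Pmax + ∑ i, a i) * a k / (∑ i, a i) - a k)) :=
    (((tendsto_const_nhds (x := Pmax + ∑ i, a i)).mul (hterm k)).div hsum_p hSpos.ne').sub
      tendsto_const_nhds
  have hq : Tendsto (fun n : ℝ => q k n) atTop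
      (nhds ((Pmax + ∑ i, a i) * a k / (∑ i, a i) - a k)) :=
    (((tendsto_const_nhds (x := Pmax + ∑ i, a i)).mul (hqterm k)).div hsum_q hSpos.ne').sub
      tendsto_const_nhds
  simpa using hp.sub hq
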